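/- The function cov is the maximal packing bound function: for every packing bound function A and every bounded Borel subset C of ℝ^d, A(C) ≤ cov(C). -/

import Mathlib

open scoped Pointwise
open MeasureTheory Bornology Filter

/-- A packing bound function: an assignment of a nonnegative real number to every bounded
Borel subset of every Euclidean space, satisfying the sphere bound, Lipschitz, union,
and mesh axioms. -/
structure PackingBoundFunction where
  toFun : ∀ d : ℕ, Set (EuclideanSpace ℝ (Fin d)) → ℝ
  nonneg : ∀ (d : ℕ) (C : Set (EuclideanSpace ℝ (Fin d))),
    IsBounded C → MeasurableSet C → 0 ≤ toFun d C
  sphere_bound : ∀ (d : ℕ) (C : Set (EuclideanSpace ℝ (Fin d))),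
    IsBounded C → MeasurableSet C → C.Nonempty →
    (∃ z, C ⊆ Metric.ball z 1) → toFun d C = 1
  lipschitz : ∀ (d d' : ℕ) (C : Set (EuclideanSpace ℝ (Fin d)))
    (C' : Set (EuclideanSpace ℝ (Fin d'))),
    IsBounded C → MeasurableSet C → IsBounded C' → MeasurableSet C' →
    (∃ ψ : EuclideanSpace ℝ (Fin d) → EuclideanSpace ℝ (Fin d'),
      (∀ x ∈ C, ψ x ∈ C') ∧ ∀ x ∈ C, ∀ y ∈ C, dist x y ≤ dist (ψ x) (ψ y)) →
    toFun d C ≤ toFun d' C'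
  union : ∀ (d : ℕ) (C C' : Set (EuclideanSpace ℝ (Fin d))),
    IsBounded C → MeasurableSet C → IsBounded C' → MeasurableSet C' →
    (∀ x ∈ C, ∀ x' ∈ C', 2 ≤ dist x x') →
    toFun d (C ∪ C') = toFun d C + toFun d C'
  mesh : ∀ (ε : ℝ), 0 < ε → ∀ (d : ℕ) (C C' : Set (EuclideanSpace ℝ (Fin d))),
    IsBounded C → MeasurableSet C → IsBounded C' → MeasurableSet C' →
    C ⊆ Metric.thickening ε C' →
    toFun d ((1 / (1 + ε)) • C) ≤ toFun d C'

/-- `cov C` is the smallest number of open unit balls (centered anywhere) needed to cover `C`. -/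
noncomputable def cov (d : ℕ) (C : Set (EuclideanSpace ℝ (Fin d))) : ℕ :=
  sInf {m : ℕ | ∃ X : Finset (EuclideanSpace ℝ (Fin d)),
    X.card = m ∧ C ⊆ ⋃ x ∈ X, Metric.ball x 1}

private lemma pbf_empty (A : PackingBoundFunction) (d : ℕ) :
    A.toFun d (∅ : Set (EuclideanSpace ℝ (Fin d))) = 0 := by
  have h := A.union d ∅ ∅ Bornology.isBounded_empty MeasurableSet.empty
    Bornology.isBounded_empty MeasurableSet.empty (by simp)
  rw [Set.union_self] at h
  linarith

private lemma pbf_balls (A : PackingBoundFunction) (d : ℕ) :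
    ∀ (n : ℕ) (w : Fin n → EuclideanSpace ℝ (Fin d)),
    (∀ i j, i ≠ j → (4:ℝ) ≤ dist (w i) (w j)) →
    A.toFun d (⋃ i, Metric.ball (w i) 1) = (n : ℝ) := by
  intro n
  induction n with
  | zero =>
    intro w _
    rw [Set.iUnion_of_empty]
    simp [pbf_empty]
  | succ n ih =>
    intro w hw
    have hsplit : (⋃ i, Metric.ball (w i) 1)
        = Metric.ball (w 0) 1 ∪ ⋃ i : Fin n, Metric.ball (w i.succ) 1 := by
      ext x
      simp only [Set.mem_iUnion, Set.mem_union]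
      constructor
      · rintro ⟨i, hi⟩
        rcases Fin.eq_zero_or_eq_succ i with h0 | ⟨j, rfl⟩
        · left; rwa [h0] at hi
        · right; exact ⟨j, hi⟩
      · rintro (h | ⟨j, hj⟩)
        exacts [⟨0, h⟩, ⟨j.succ, hj⟩]
    have hb1 : Bornology.IsBounded (Metric.ball (w 0) 1) := Metric.isBounded_ball
    have hb2 : Bornology.IsBounded (⋃ i : Fin n, Metric.ball (w (Fin.succ i)) 1) :=
      Bornology.isBounded_iUnion.mpr fun _ => Metric.isBounded_ball
    have hm1 : MeasurableSet (Metric.ball (w 0) 1) := Metric.isOpen_ball.measurableSet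
    have hm2 : MeasurableSet (⋃ i : Fin n, Metric.ball (w (Fin.succ i)) 1) :=
      (isOpen_iUnion fun _ => Metric.isOpen_ball).measurableSet
    have hsep : ∀ x ∈ Metric.ball (w 0) 1, ∀ y ∈ ⋃ i : Fin n, Metric.ball (w (Fin.succ i)) 1,
        (2:ℝ) ≤ dist x y := by
      intro x hx y hy
      rcases Set.mem_iUnion.mp hy with ⟨j, hj⟩
      have h4 : (4:ℝ) ≤ dist (w 0) (w j.succ) := hw 0 j.succ (Fin.succ_ne_zero j).symm
      have htri := dist_triangle4 (w 0) x y (w (Fin.succ j))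
      rw [Metric.mem_ball] at hx hj
      have hx' : dist (w 0) x ≤ 1 := by rw [dist_comm]; linarith
      have hj' : dist y (w (Fin.succ j)) ≤ 1 := hj.le
      linarith
    rw [hsplit, A.union d _ _ hb1 hm1 hb2 hm2 hsep,
      A.sphere_bound d _ hb1 hm1 ⟨w 0, Metric.mem_ball_self one_pos⟩ ⟨w 0, subset_rfl⟩,
      ih (fun i => w i.succ) (fun i j hij => hw i.succ j.succ (by simpa using hij))]
    push_cast
    ring

/-- `cov` is the maximal packing bound function: every packing bound
function is dominated by `cov` on bounded Borel sets. -/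
theorem packingBoundFunction_le_cov (A : PackingBoundFunction) (d : ℕ)
    (C : Set (EuclideanSpace ℝ (Fin d))) (hCb : IsBounded C) (hCm : MeasurableSet C) :
    A.toFun d C ≤ (cov d C : ℝ) := by
  classical
  rcases C.eq_empty_or_nonempty with rfl | hne
  · rw [pbf_empty]
    positivity
  set S : Set ℕ := {m : ℕ | ∃ X : Finset (EuclideanSpace ℝ (Fin d)),
    X.card = m ∧ C ⊆ ⋃ x ∈ X, Metric.ball x 1} with hSdef
  have hS : S.Nonempty := by
    have htb : TotallyBounded C :=
      (hCb.isCompact_closure.totallyBounded).subset subset_closure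
    rcases Metric.totallyBounded_iff.mp htb 1 one_pos with ⟨t, htf, hts⟩
    refine ⟨htf.toFinset.card, htf.toFinset, rfl, fun x hx => ?_⟩
    rcases Set.mem_iUnion₂.mp (hts hx) with ⟨y, hy, hxy⟩
    exact Set.mem_iUnion₂.mpr ⟨y, htf.mem_toFinset.mpr hy, hxy⟩
  have hmem : cov d C ∈ S := Nat.sInf_mem hS
  obtain ⟨X, hXcard, hXcov⟩ := hmem
  have hpos : 0 < X.card := by
    obtain ⟨c, hc⟩ := hne
    rcases Set.mem_iUnion₂.mp (hXcov hc) with ⟨y, hy, _⟩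
    exact Finset.card_pos.mpr ⟨y, hy⟩
  rcases Nat.eq_zero_or_pos d with rfl | hd
  · -- dimension 0 : the space is a subsingleton
    haveI : Subsingleton (EuclideanSpace ℝ (Fin 0)) :=
      ⟨fun a b => PiLp.ext fun i => Fin.elim0 i⟩
    obtain ⟨c, hc⟩ := hne
    have hA1 : A.toFun 0 C = 1 := by
      refine A.sphere_bound 0 C hCb hCm ⟨c, hc⟩ ⟨c, fun x hx => ?_⟩
      have : x = c := Subsingleton.elim x c
      simp [this, Metric.mem_ball]
    rw [hA1]
    have : (1 : ℝ) ≤ (X.card : ℝ) := by exact_mod_cast hpos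
    rw [← hXcard]
    exact this
  · -- positive dimension
    obtain ⟨D, hD⟩ := Metric.isBounded_iff.mp hCb
    set M : ℝ := max D 0 + 4 with hMdef
    have hM4 : (4:ℝ) ≤ M := le_add_of_nonneg_left (le_max_right D 0)
    have hDM : D ≤ M - 4 := by
      have := le_max_left D 0
      simp only [hMdef]
      linarith
    set i0 : Fin d := ⟨0, hd⟩ with hi0
    set e0 : EuclideanSpace ℝ (Fin d) := EuclideanSpace.single i0 1 with he0def
    have he0 : ‖e0‖ = 1 := by simp [he0def, EuclideanSpace.norm_single]
    set z : Fin X.card → EuclideanSpace ℝ (Fin d) :=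
      fun i => ((X.equivFin.symm i : {x // x ∈ X}) : EuclideanSpace ℝ (Fin d)) with hz
    set w : Fin X.card → EuclideanSpace ℝ (Fin d) :=
      fun i => (((i : ℕ) : ℝ) * M) • e0 with hwdef
    have hwd : ∀ i j, i ≠ j → M ≤ dist (w i) (w j) := by
      intro i j hij
      have hne2 : ((i : ℕ) : ℤ) ≠ ((j : ℕ) : ℤ) := by
        exact_mod_cast fun h => hij (Fin.ext h)
      have h1 : (1:ℝ) ≤ |((i : ℕ) : ℝ) - ((j : ℕ) : ℝ)| := by
        have h2 : (1:ℤ) ≤ |((i : ℕ) : ℤ) - ((j : ℕ) : ℤ)| :=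
          Int.one_le_abs (sub_ne_zero.mpr hne2)
        have h3 : ((i : ℕ) : ℝ) - ((j : ℕ) : ℝ) = ((((i : ℕ) : ℤ) - ((j : ℕ) : ℤ) : ℤ) : ℝ) := by
          push_cast; ring
        rw [h3, ← Int.cast_abs]
        exact_mod_cast h2
      have hdist : dist (w i) (w j) = |((i : ℕ) : ℝ) * M - ((j : ℕ) : ℝ) * M| * ‖e0‖ := by
        rw [hwdef, dist_eq_norm, ← sub_smul, norm_smul, Real.norm_eq_abs]
      rw [hdist, he0, mul_one]
      have : ((i : ℕ) : ℝ) * M - ((j : ℕ) : ℝ) * M = (((i : ℕ) : ℝ) - ((j : ℕ) : ℝ)) * M := by ring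
      rw [this, abs_mul, abs_of_nonneg (by linarith : (0:ℝ) ≤ M)]
      nlinarith
    have hex : ∀ x ∈ C, ∃ i, x ∈ Metric.ball (z i) 1 := by
      intro x hx
      rcases Set.mem_iUnion₂.mp (hXcov hx) with ⟨y, hy, hxy⟩
      refine ⟨X.equivFin ⟨y, hy⟩, ?_⟩
      have : z (X.equivFin ⟨y, hy⟩) = y := by simp [hz]
      rwa [this]
    set idx : EuclideanSpace ℝ (Fin d) → Fin X.card :=
      fun x => if h : ∃ i, x ∈ Metric.ball (z i) 1 then h.choose else ⟨0, hpos⟩ with hidxdef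
    have hidx : ∀ x ∈ C, x ∈ Metric.ball (z (idx x)) 1 := by
      intro x hx
      have h := hex x hx
      simp only [hidxdef, dif_pos h]
      exact h.choose_spec
    set ψ : EuclideanSpace ℝ (Fin d) → EuclideanSpace ℝ (Fin d) :=
      fun x => x - z (idx x) + w (idx x) with hψ
    set C' : Set (EuclideanSpace ℝ (Fin d)) := ⋃ i, Metric.ball (w i) 1 with hC'
    have hC'b : Bornology.IsBounded C' :=
      Bornology.isBounded_iUnion.mpr fun _ => Metric.isBounded_ball
    have hC'm : MeasurableSet C' :=
      (isOpen_iUnion fun _ => Metric.isOpen_ball).measurableSet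
    have hψw : ∀ x ∈ C, dist (ψ x) (w (idx x)) < 1 := by
      intro x hx
      have h1 : ψ x - w (idx x) = x - z (idx x) := by simp only [hψ]; abel
      rw [dist_eq_norm, h1, ← dist_eq_norm]
      exact Metric.mem_ball.mp (hidx x hx)
    have hmap : ∀ x ∈ C, ψ x ∈ C' := by
      intro x hx
      exact Set.mem_iUnion.mpr ⟨idx x, Metric.mem_ball.mpr (hψw x hx)⟩
    have hexp : ∀ x ∈ C, ∀ y ∈ C, dist x y ≤ dist (ψ x) (ψ y) := by
      intro x hx y hy
      by_cases hij : idx x = idx y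
      · have h1 : ψ x - ψ y = x - y := by simp only [hψ]; rw [hij]; abel
        rw [dist_eq_norm, dist_eq_norm, h1]
      · have h1 := hψw x hx
        have h2 := hψw y hy
        have h3 : M ≤ dist (w (idx x)) (w (idx y)) := hwd _ _ hij
        have htri := dist_triangle4 (w (idx x)) (ψ x) (ψ y) (w (idx y))
        have h4 : dist (w (idx x)) (ψ x) < 1 := by rw [dist_comm]; exact h1
        have h5 : dist (ψ y) (w (idx y)) < 1 := h2
        have h6 : dist x y ≤ D := hD hx hy
        linarith
    have hlip : A.toFun d C ≤ A.toFun d C' :=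
      A.lipschitz d d C C' hCb hCm hC'b hC'm ⟨ψ, hmap, hexp⟩
    have hballs : A.toFun d C' = (X.card : ℝ) := by
      refine pbf_balls A d X.card w (fun i j hij => le_trans hM4 (hwd i j hij))
    rw [← hXcard]
    rw [hballs] at hlip
    exact hlip
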